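/- arXiv:1009.2009 — 2 statements merged into one kernel-verified Lean document; each statement's English description precedes it below -/
import Mathlib

section
/- In the semi-Markov model, the total potential of all segmentations of [1,T] containing a prescribed segment factorizes through the forward and backward masses: for all s ∈ S and 1 ≤ i ≤ j ≤ T, the sum of Φ[ζ] over all segmentations ζ of [1,T] having a segment with state s spanning exactly [i,j] equals Lft(s,i) · R(s,i,j) · Rgt(s,j), where Lft(s,i) = Σ_{s' ∈ S} α_{i-1}(s') · A(s',s,i-1) if i > 1 and Lft(s,1) = 1, and Rgt(s,j) = Σ_{s'' ∈ S} A(s,s'',j) · β_{j+1}(s'') if j < T and Rgt(s,T) = 1. -/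
/-- A segmentation of an interval is encoded as a nonempty list of pairs
(state, positive segment length).  `segPhi R A t0 ζ` is the joint potential of
the segmentation `ζ` of an interval starting at time `t0 + 1`: the product of
the segment potentials `R s (t_{k-1}+1) t_k` over all segments and of the
transition potentials `A s_k s_{k+1} t_k` over consecutive segments. -/
noncomputable def segPhi {S : Type*} (R : S → ℕ → ℕ → ℝ) (A : S → S → ℕ → ℝ) :
    ℕ → List (S × ℕ) → ℝ
  | _, [] => 1
  | t0, [(s, l)] => R s (t0 + 1) (t0 + l)
  | t0, (s, l) :: (s', l') :: rest =>
      R s (t0 + 1) (t0 + l) * A s s' (t0 + l) *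
        segPhi R A (t0 + l) ((s', l') :: rest)

/-- `IsSegmentation a b ζ` : the list `ζ` of (state, length) pairs is a
segmentation of the interval `[a, b]`: it is nonempty, all segment lengths are
positive, and the lengths sum to `b - a + 1`. -/
def IsSegmentation {S : Type*} (a b : ℕ) (ζ : List (S × ℕ)) : Prop :=
  ζ ≠ [] ∧ (∀ p ∈ ζ, 0 < p.2) ∧ (ζ.map Prod.snd).sum = b + 1 - a

/-- The forward mass `α_j(s)`: the sum of the joint potentials of all
segmentations of `[1, j]` whose last segment has state `s`. -/
noncomputable def fwdMass {S : Type*} (R : S → ℕ → ℕ → ℝ) (A : S → S → ℕ → ℝ)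
    (j : ℕ) (s : S) : ℝ :=
  ∑ᶠ ζ ∈ {ζ : List (S × ℕ) |
      IsSegmentation 1 j ζ ∧ Option.map Prod.fst ζ.getLast? = some s},
    segPhi R A 0 ζ

/-- The backward mass `β_i(s)`: the sum of the joint potentials of all
segmentations of `[i, T]` whose first segment has state `s`. -/
noncomputable def bwdMass {S : Type*} (R : S → ℕ → ℕ → ℝ) (A : S → S → ℕ → ℝ)
    (T : ℕ) (i : ℕ) (s : S) : ℝ :=
  ∑ᶠ ζ ∈ {ζ : List (S × ℕ) |
      IsSegmentation i T ζ ∧ Option.map Prod.fst ζ.head? = some s},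
    segPhi R A (i - 1) ζ

/-- `HasSegment s i j t0 ζ` : the segmentation `ζ` of an interval starting at
time `t0 + 1` contains a segment with state `s` spanning exactly `[i, j]`. -/
def HasSegment {S : Type*} (s : S) (i j : ℕ) : ℕ → List (S × ℕ) → Prop
  | _, [] => False
  | t0, (s', l) :: rest =>
      (s' = s ∧ t0 + 1 = i ∧ t0 + l = j) ∨ HasSegment s i j (t0 + l) rest

/-- `segMass R A T s i j` : the sum of the joint potentials of all segmentations
of `[1, T]` having a segment with state `s` spanning exactly `[i, j]`. -/
noncomputable def segMass {S : Type*} (R : S → ℕ → ℕ → ℝ) (A : S → S → ℕ → ℝ)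
    (T : ℕ) (s : S) (i j : ℕ) : ℝ :=
  ∑ᶠ ζ ∈ {ζ : List (S × ℕ) | IsSegmentation 1 T ζ ∧ HasSegment s i j 0 ζ},
    segPhi R A 0 ζ

section Aux
variable {S : Type*}

lemma segPhi_cons (R : S → ℕ → ℕ → ℝ) (A : S → S → ℕ → ℝ) (t0 : ℕ) (s : S) (l : ℕ)
    {rest : List (S × ℕ)} (h : rest ≠ []) :
    segPhi R A t0 ((s, l) :: rest) =
      R s (t0 + 1) (t0 + l) * A s (rest.head h).1 (t0 + l) * segPhi R A (t0 + l) rest := by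
  match rest with
  | (s', l') :: r => rfl

lemma segPhi_append (R : S → ℕ → ℕ → ℝ) (A : S → S → ℕ → ℝ)
    (p : S × ℕ) (L : List (S × ℕ)) {rest : List (S × ℕ)} (hrest : rest ≠ []) :
    ∀ t0 : ℕ, segPhi R A t0 ((p :: L) ++ rest) =
      segPhi R A t0 (p :: L) *
        A ((p :: L).getLast (by simp)).1 (rest.head hrest).1
          (t0 + ((p :: L).map Prod.snd).sum) *
        segPhi R A (t0 + ((p :: L).map Prod.snd).sum) rest := by
  induction L generalizing p with
  | nil =>
      intro t0
      obtain ⟨s, l⟩ := p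
      rw [List.singleton_append, segPhi_cons R A t0 s l hrest]
      simp [segPhi]
  | cons q L ih =>
      intro t0
      obtain ⟨s, l⟩ := p
      have h2 : (q :: L) ++ rest ≠ [] := by simp
      rw [List.cons_append, segPhi_cons R A t0 s l (by simp : (q :: L) ++ rest ≠ []),
        segPhi_cons R A t0 s l (by simp : q :: L ≠ [])]
      have hh : ((q :: L) ++ rest).head h2 = (q :: L).head (by simp) := by
        cases q; rfl
      rw [hh]
      rw [ih q (t0 + l)]
      have hlast : ((s, l) :: q :: L).getLast (by simp) = (q :: L).getLast (by simp) :=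
        List.getLast_cons _
      rw [hlast]
      simp [List.map_cons, List.sum_cons, add_assoc]
      ring

lemma hasSegment_iff (s : S) (i j : ℕ) (ζ : List (S × ℕ)) :
    ∀ t0 : ℕ, HasSegment s i j t0 ζ ↔
      ∃ L l Rt, ζ = L ++ (s, l) :: Rt ∧ t0 + (L.map Prod.snd).sum + 1 = i ∧
        t0 + (L.map Prod.snd).sum + l = j := by
  induction ζ with
  | nil =>
      intro t0
      simp [HasSegment]
  | cons p rest ih =>
      intro t0
      obtain ⟨s', l'⟩ := p
      constructor
      · rintro (⟨rfl, h1, h2⟩ | h)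
        · exact ⟨[], l', rest, by simp, by simpa using h1, by simpa using h2⟩
        · obtain ⟨L, l, Rt, rfl, h1, h2⟩ := (ih (t0 + l')).1 h
          exact ⟨(s', l') :: L, l, Rt, rfl, by simpa [add_assoc] using h1,
            by simpa [add_assoc] using h2⟩
      · rintro ⟨L, l, Rt, heq, h1, h2⟩
        cases L with
        | nil =>
            simp at heq
            obtain ⟨⟨rfl, rfl⟩, rfl⟩ := heq
            exact Or.inl ⟨rfl, by simpa using h1, by simpa using h2⟩
        | cons q L =>
            rw [List.cons_append] at heq
            injection heq with h1 heq
            subst h1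
            refine Or.inr ((ih (t0 + l')).2 ⟨L, l, Rt, heq, ?_, ?_⟩)
            · simpa [add_assoc] using h1
            · simpa [add_assoc] using h2

lemma prefix_unique : ∀ (L1 : List (S × ℕ)) (L2 : List (S × ℕ)) (x y : S × ℕ)
    (R1 R2 : List (S × ℕ)),
    L1 ++ x :: R1 = L2 ++ y :: R2 →
    (∀ p ∈ L1 ++ x :: R1, 0 < p.2) →
    (L1.map Prod.snd).sum = (L2.map Prod.snd).sum →
    L1 = L2 ∧ x = y ∧ R1 = R2 := by
  intro L1
  induction L1 with
  | nil =>
      intro L2 x y R1 R2 heq hpos hsum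
      cases L2 with
      | nil => simpa using heq
      | cons q L2 =>
          exfalso
          have hq : 0 < q.2 := by
            apply hpos
            rw [heq]; simp
          simp at hsum
          omega
  | cons p L1 ih =>
      intro L2 x y R1 R2 heq hpos hsum
      cases L2 with
      | nil =>
          exfalso
          have hp : 0 < p.2 := hpos p (by simp)
          simp at hsum
          omega
      | cons q L2 =>
          simp only [List.cons_append, List.cons.injEq] at heq
          obtain ⟨rfl, heq⟩ := heq
          simp only [List.map_cons, List.sum_cons] at hsum
          have hsum' : (L1.map Prod.snd).sum = (L2.map Prod.snd).sum := by omega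
          obtain ⟨h1, h2, h3⟩ := ih L2 x y R1 R2 heq
            (fun r hr => hpos r (by simp [hr])) hsum'
          exact ⟨by rw [h1], h2, h3⟩

lemma eq_nil_of_sum_eq_zero {L : List (S × ℕ)} (hpos : ∀ p ∈ L, 0 < p.2)
    (h : (L.map Prod.snd).sum = 0) : L = [] := by
  cases L with
  | nil => rfl
  | cons p L =>
      exfalso
      have := hpos p (by simp)
      simp at h
      omega

lemma length_le_sum : ∀ l : List ℕ, (∀ x ∈ l, 0 < x) → l.length ≤ l.sum := by
  intro l
  induction l with
  | nil => simp
  | cons a l ih =>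
      intro h
      have ha := h a (by simp)
      have := ih (fun x hx => h x (by simp [hx]))
      simp only [List.length_cons, List.sum_cons]
      omega

lemma segs_finite [Fintype S] (a b : ℕ) :
    {ζ : List (S × ℕ) | IsSegmentation a b ζ}.Finite := by
  set N := b + 1 - a with hN
  apply Set.Finite.subset
    (Set.Finite.image (fun l : List (S × Fin (N + 1)) =>
      l.map (fun p => (p.1, (p.2 : ℕ)))) (List.finite_length_le (S × Fin (N + 1)) N))
  rintro ζ ⟨-, hpos, hsum⟩
  have hbound : ∀ p ∈ ζ, p.2 ≤ N := by
    intro p hp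
    calc p.2 ≤ (ζ.map Prod.snd).sum :=
          List.single_le_sum (fun x _ => Nat.zero_le x) _ (List.mem_map_of_mem hp)
      _ = N := hsum
  refine ⟨ζ.map (fun p => (p.1, (⟨min p.2 N, by omega⟩ : Fin (N + 1)))), ?_, ?_⟩
  · simp only [Set.mem_setOf_eq, List.length_map]
    calc ζ.length = (ζ.map Prod.snd).length := by simp
      _ ≤ (ζ.map Prod.snd).sum := length_le_sum _ (by
          intro x hx
          obtain ⟨p, hp, rfl⟩ := List.mem_map.1 hx
          exact hpos p hp)
      _ = N := hsum
  · dsimp only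
    rw [List.map_map]
    conv_rhs => rw [← List.map_id ζ]
    apply List.map_congr_left
    intro p hp
    have := hbound p hp
    simp [min_eq_left this]

end Aux

/-- The total potential of all segmentations of `[1,T]` containing a prescribed
segment `(s, [i,j])` factorizes through the forward and backward masses:
`M(s,i,j) = Lft(s,i) · R(s,i,j) · Rgt(s,j)` where
`Lft(s,i) = Σ_{s'} α_{i-1}(s') A(s',s,i-1)` for `i > 1`, `Lft(s,1) = 1`, and
`Rgt(s,j) = Σ_{s''} A(s,s'',j) β_{j+1}(s'')` for `j < T`, `Rgt(s,T) = 1`. -/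
theorem semiCRF_segment_marginal_factorization {S : Type*} [Fintype S] [Nonempty S]
    (T : ℕ) (hT : 1 ≤ T)
    (R : S → ℕ → ℕ → ℝ) (A : S → S → ℕ → ℝ)
    (s : S) (i j : ℕ) (hi : 1 ≤ i) (hij : i ≤ j) (hjT : j ≤ T) :
    segMass R A T s i j =
      (if 1 < i then ∑ s' : S, fwdMass R A (i - 1) s' * A s' s (i - 1) else 1) *
        R s i j *
        (if j < T then ∑ s'' : S, A s s'' j * bwdMass R A T (j + 1) s'' else 1) := by
  classical
  set l0 : ℕ := j + 1 - i with hl0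
  have hl0pos : 0 < l0 := by omega
  set Lset : Set (List (S × ℕ)) :=
    {L | (L = [] ∧ i = 1) ∨ IsSegmentation 1 (i - 1) L} with hLset
  set Rset : Set (List (S × ℕ)) :=
    {Rt | (Rt = [] ∧ j = T) ∨ IsSegmentation (j + 1) T Rt} with hRset
  set glue : List (S × ℕ) × List (S × ℕ) → List (S × ℕ) :=
    (fun p => p.1 ++ (s, l0) :: p.2) with hglue
  set lphi : List (S × ℕ) → ℝ :=
    (fun L => L.getLast?.elim 1 (fun q => segPhi R A 0 L * A q.1 s (i - 1))) with hlphi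
  set rphi : List (S × ℕ) → ℝ :=
    (fun Rt => Rt.head?.elim 1 (fun q => A s q.1 j * segPhi R A j Rt)) with hrphi
  -- basic facts about members of Lset / Rset
  have hLmem : ∀ L ∈ Lset, (∀ p ∈ L, 0 < p.2) ∧ (L.map Prod.snd).sum = i - 1 := by
    rintro L (⟨rfl, rfl⟩ | h)
    · simp
    · exact ⟨h.2.1, by have := h.2.2; omega⟩
  have hRmem : ∀ Rt ∈ Rset, (∀ p ∈ Rt, 0 < p.2) ∧ (Rt.map Prod.snd).sum = T - j := by
    rintro Rt (⟨rfl, rfl⟩ | h)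
    · simp
    · exact ⟨h.2.1, by have := h.2.2; omega⟩
  -- Step A : set equality
  have hset : {ζ : List (S × ℕ) | IsSegmentation 1 T ζ ∧ HasSegment s i j 0 ζ} =
      glue '' (Lset ×ˢ Rset) := by
    ext ζ
    constructor
    · rintro ⟨⟨hne, hpos, hsum⟩, hhas⟩
      obtain ⟨L, l, Rt, rfl, h1, h2⟩ := (hasSegment_iff s i j ζ 0).1 hhas
      have hposL : ∀ p ∈ L, 0 < p.2 := fun p hp => hpos p (by simp [hp])
      have hposR : ∀ p ∈ Rt, 0 < p.2 := fun p hp => hpos p (by simp [hp])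
      have hsumL : (L.map Prod.snd).sum = i - 1 := by omega
      have hl : l = l0 := by omega
      have hsum' : (L.map Prod.snd).sum + (l + (Rt.map Prod.snd).sum) = T := by
        simp only [List.map_append, List.sum_append, List.map_cons, List.sum_cons] at hsum
        omega
      have hsumR : (Rt.map Prod.snd).sum = T - j := by omega
      have hLm : L ∈ Lset := by
        by_cases h1i : i = 1
        · exact Or.inl ⟨eq_nil_of_sum_eq_zero hposL (by omega), h1i⟩
        · refine Or.inr ⟨?_, hposL, by omega⟩
          intro hnil
          rw [hnil] at hsumL
          simp at hsumL
          omega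
      have hRm : Rt ∈ Rset := by
        by_cases hjT' : j = T
        · exact Or.inl ⟨eq_nil_of_sum_eq_zero hposR (by omega), hjT'⟩
        · refine Or.inr ⟨?_, hposR, by omega⟩
          intro hnil
          rw [hnil] at hsumR
          simp at hsumR
          omega
      exact ⟨(L, Rt), ⟨hLm, hRm⟩, by simp [hglue, hl]⟩
    · rintro ⟨⟨L, Rt⟩, ⟨hL, hR⟩, rfl⟩
      obtain ⟨hposL, hsumL⟩ := hLmem L hL
      obtain ⟨hposR, hsumR⟩ := hRmem Rt hR
      refine ⟨⟨by simp [hglue], ?_, ?_⟩, ?_⟩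
      · intro p hp
        simp only [hglue, List.mem_append, List.mem_cons] at hp
        rcases hp with h | h | h
        · exact hposL p h
        · rw [h]; exact hl0pos
        · exact hposR p h
      · simp only [hglue, List.map_append, List.sum_append, List.map_cons, List.sum_cons]
        omega
      · exact (hasSegment_iff s i j _ 0).2 ⟨L, l0, Rt, rfl, by omega, by omega⟩
  -- Step B : injectivity
  have hinj : Set.InjOn glue (Lset ×ˢ Rset) := by
    rintro ⟨L1, R1⟩ ⟨h1L, h1R⟩ ⟨L2, R2⟩ ⟨h2L, h2R⟩ heq
    obtain ⟨hp1, hs1⟩ := hLmem L1 h1L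
    obtain ⟨hp1R, -⟩ := hRmem R1 h1R
    obtain ⟨-, hs2⟩ := hLmem L2 h2L
    have hpos : ∀ p ∈ L1 ++ (s, l0) :: R1, 0 < p.2 := by
      intro p hp
      simp only [List.mem_append, List.mem_cons] at hp
      rcases hp with h | h | h
      · exact hp1 p h
      · rw [h]; exact hl0pos
      · exact hp1R p h
    obtain ⟨e1, -, e3⟩ := prefix_unique L1 L2 (s, l0) (s, l0) R1 R2 heq hpos (by omega)
    simp [e1, e3]
  -- finiteness
  have hLfin : Lset.Finite := by
    apply Set.Finite.subset ((segs_finite 1 (i - 1)).insert [])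
    rintro L (⟨rfl, -⟩ | h)
    · exact Set.mem_insert _ _
    · exact Set.mem_insert_of_mem _ h
  have hRfin : Rset.Finite := by
    apply Set.Finite.subset ((segs_finite (j + 1) T).insert [])
    rintro Rt (⟨rfl, -⟩ | h)
    · exact Set.mem_insert _ _
    · exact Set.mem_insert_of_mem _ h
  have hPfin : (Lset ×ˢ Rset).Finite := hLfin.prod hRfin
  -- Step C and D : rewrite segMass as a sum over pairs
  have hpt : ∀ p ∈ Lset ×ˢ Rset,
      segPhi R A 0 (glue p) = lphi p.1 * R s i j * rphi p.2 := by
    rintro ⟨L, Rt⟩ ⟨hL, hR⟩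
    obtain ⟨hposL, hsumL⟩ := hLmem L hL
    simp only [hglue]
    cases L with
    | nil =>
        have hi1 : i = 1 := by
          rcases hL with ⟨-, h⟩ | h
          · exact h
          · exact absurd rfl h.1
        have hlphi0 : lphi [] = 1 := by simp [hlphi]
        cases Rt with
        | nil =>
            rw [hlphi0]
            show segPhi R A 0 [(s, l0)] = 1 * R s i j * rphi []
            rw [show segPhi R A 0 [(s, l0)] = R s (0 + 1) (0 + l0) from rfl,
              show (0 : ℕ) + 1 = i by omega, show 0 + l0 = j by omega]
            simp [hrphi]
        | cons r Rt' =>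
            rw [hlphi0, List.nil_append,
              segPhi_cons R A 0 s l0 (by simp : r :: Rt' ≠ []),
              show (0 : ℕ) + 1 = i by omega, show 0 + l0 = j by omega]
            simp only [hrphi, List.head?_cons, Option.elim, List.head_cons]
            ring
    | cons q L' =>
        have hLseg : IsSegmentation 1 (i - 1) (q :: L') := by
          rcases hL with ⟨h, -⟩ | h
          · exact absurd h (by simp)
          · exact h
        have h1i : 1 < i := by
          have hq := hposL q (by simp)
          have : 0 < (List.map Prod.snd (q :: L')).sum := by
            simp only [List.map_cons, List.sum_cons]; omega
          omega
        have hlphiL : lphi (q :: L') =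
            segPhi R A 0 (q :: L') * A ((q :: L').getLast (by simp)).1 s (i - 1) := by
          rw [hlphi]
          simp only [List.getLast?_eq_getLast (by simp : q :: L' ≠ []), Option.elim]
        rw [segPhi_append R A q L' (by simp : (s, l0) :: Rt ≠ []) 0,
          show (0 + (List.map Prod.snd (q :: L')).sum) = i - 1 by omega]
        simp only [List.head_cons]
        cases Rt with
        | nil =>
            rw [show segPhi R A (i - 1) [(s, l0)] = R s (i - 1 + 1) (i - 1 + l0) from rfl,
              show i - 1 + 1 = i by omega, show i - 1 + l0 = j by omega, hlphiL]
            simp only [hrphi, List.head?_nil, Option.elim]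
            ring
        | cons r Rt' =>
            rw [segPhi_cons R A (i - 1) s l0 (by simp : r :: Rt' ≠ []),
              show i - 1 + 1 = i by omega, show i - 1 + l0 = j by omega, hlphiL]
            simp only [hrphi, List.head?_cons, Option.elim, List.head_cons]
            ring
  have hstep : segMass R A T s i j =
      (∑ L ∈ hLfin.toFinset, lphi L) * R s i j * (∑ Rt ∈ hRfin.toFinset, rphi Rt) := by
    rw [segMass, hset, finsum_mem_image hinj, finsum_mem_congr rfl hpt,
      finsum_mem_eq_finite_toFinset_sum _ hPfin]
    have hprod : hPfin.toFinset = hLfin.toFinset ×ˢ hRfin.toFinset := by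
      ext ⟨a, b⟩
      simp [Set.Finite.mem_toFinset]
    rw [hprod, Finset.sum_product, Finset.sum_mul, Finset.sum_mul]
    apply Finset.sum_congr rfl
    intro L _
    rw [Finset.mul_sum]
  rw [hstep]
  -- Step G : left factor
  have hLfactor : (∑ L ∈ hLfin.toFinset, lphi L) =
      (if 1 < i then ∑ s' : S, fwdMass R A (i - 1) s' * A s' s (i - 1) else 1) := by
    by_cases h1i : 1 < i
    · rw [if_pos h1i]
      symm
      have hiseg : ∀ L, L ∈ hLfin.toFinset ↔ IsSegmentation 1 (i - 1) L := by
        intro L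
        rw [Set.Finite.mem_toFinset]
        constructor
        · rintro (⟨rfl, h⟩ | h)
          · omega
          · exact h
        · exact Or.inr
      set c : List (S × ℕ) → S :=
        fun L => (L.getLast?.map Prod.fst).getD (Classical.arbitrary S) with hc
      have hfib : ∀ s' : S, fwdMass R A (i - 1) s' =
          ∑ L ∈ hLfin.toFinset.filter (fun L => c L = s'), segPhi R A 0 L := by
        intro s'
        have hfin' : {L : List (S × ℕ) | IsSegmentation 1 (i - 1) L ∧
            Option.map Prod.fst L.getLast? = some s'}.Finite :=
          (segs_finite 1 (i - 1)).subset (fun x hx => hx.1)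
        rw [fwdMass, finsum_mem_eq_finite_toFinset_sum _ hfin']
        apply Finset.sum_congr _ (fun _ _ => rfl)
        ext L
        rw [Set.Finite.mem_toFinset, Finset.mem_filter, hiseg]
        constructor
        · rintro ⟨hseg, hlast⟩
          refine ⟨hseg, ?_⟩
          cases hLq : L.getLast? with
          | none => rw [hLq] at hlast; simp at hlast
          | some p =>
              rw [hLq] at hlast
              simp only [Option.map_some, Option.some.injEq] at hlast
              simp [hc, hLq, hlast]
        · rintro ⟨hseg, hcL⟩
          refine ⟨hseg, ?_⟩
          have hne := hseg.1
          simp only [hc, List.getLast?_eq_getLast hne, Option.map_some,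
            Option.getD_some] at hcL
          simp [List.getLast?_eq_getLast hne, hcL]
      calc ∑ s' : S, fwdMass R A (i - 1) s' * A s' s (i - 1)
          = ∑ s' : S, ∑ L ∈ hLfin.toFinset.filter (fun L => c L = s'),
              segPhi R A 0 L * A s' s (i - 1) := by
            refine Finset.sum_congr rfl fun s' _ => ?_
            rw [hfib, Finset.sum_mul]
        _ = ∑ s' : S, ∑ L ∈ hLfin.toFinset.filter (fun L => c L = s'), lphi L := by
            refine Finset.sum_congr rfl fun s' _ => Finset.sum_congr rfl fun L hLf => ?_
            obtain ⟨hmem, hcL⟩ := Finset.mem_filter.1 hLf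
            have hseg := (hiseg L).1 hmem
            have hne := hseg.1
            simp only [hc, List.getLast?_eq_getLast hne, Option.map_some,
              Option.getD_some] at hcL
            rw [hlphi]
            simp only [List.getLast?_eq_getLast hne, Option.elim]
            rw [hcL]
        _ = ∑ L ∈ hLfin.toFinset, lphi L :=
            Finset.sum_fiberwise_of_maps_to (fun x _ => Finset.mem_univ (c x)) lphi
    · rw [if_neg h1i]
      have hi1 : i = 1 := by omega
      have hsingle : hLfin.toFinset = {([] : List (S × ℕ))} := by
        ext L
        rw [Set.Finite.mem_toFinset, Finset.mem_singleton]
        constructor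
        · rintro (⟨rfl, -⟩ | h)
          · rfl
          · exact absurd (eq_nil_of_sum_eq_zero h.2.1 (by have := h.2.2; omega)) h.1
        · rintro rfl
          exact Or.inl ⟨rfl, hi1⟩
      rw [hsingle, Finset.sum_singleton]
      simp [hlphi]
  -- Step H : right factor
  have hRfactor : (∑ Rt ∈ hRfin.toFinset, rphi Rt) =
      (if j < T then ∑ s'' : S, A s s'' j * bwdMass R A T (j + 1) s'' else 1) := by
    by_cases hjt : j < T
    · rw [if_pos hjt]
      symm
      have hiseg : ∀ Rt, Rt ∈ hRfin.toFinset ↔ IsSegmentation (j + 1) T Rt := by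
        intro Rt
        rw [Set.Finite.mem_toFinset]
        constructor
        · rintro (⟨rfl, h⟩ | h)
          · omega
          · exact h
        · exact Or.inr
      set c : List (S × ℕ) → S :=
        fun Rt => (Rt.head?.map Prod.fst).getD (Classical.arbitrary S) with hc
      have hfib : ∀ s'' : S, bwdMass R A T (j + 1) s'' =
          ∑ Rt ∈ hRfin.toFinset.filter (fun Rt => c Rt = s''), segPhi R A j Rt := by
        intro s''
        have hfin' : {Rt : List (S × ℕ) | IsSegmentation (j + 1) T Rt ∧
            Option.map Prod.fst Rt.head? = some s''}.Finite :=
          (segs_finite (j + 1) T).subset (fun x hx => hx.1)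
        rw [bwdMass, finsum_mem_eq_finite_toFinset_sum _ hfin']
        simp only [Nat.add_sub_cancel]
        apply Finset.sum_congr _ (fun _ _ => rfl)
        ext Rt
        rw [Set.Finite.mem_toFinset, Finset.mem_filter, hiseg]
        constructor
        · rintro ⟨hseg, hhead⟩
          refine ⟨hseg, ?_⟩
          cases hq : Rt.head? with
          | none => rw [hq] at hhead; simp at hhead
          | some p =>
              rw [hq] at hhead
              simp only [Option.map_some, Option.some.injEq] at hhead
              simp [hc, hq, hhead]
        · rintro ⟨hseg, hcR⟩
          refine ⟨hseg, ?_⟩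
          have hne := hseg.1
          cases Rt with
          | nil => exact absurd rfl hne
          | cons r Rt' =>
              simp only [hc, List.head?_cons, Option.map_some, Option.getD_some] at hcR
              simp [hcR]
      calc ∑ s'' : S, A s s'' j * bwdMass R A T (j + 1) s''
          = ∑ s'' : S, ∑ Rt ∈ hRfin.toFinset.filter (fun Rt => c Rt = s''),
              A s s'' j * segPhi R A j Rt := by
            refine Finset.sum_congr rfl fun s'' _ => ?_
            rw [hfib, Finset.mul_sum]
        _ = ∑ s'' : S, ∑ Rt ∈ hRfin.toFinset.filter (fun Rt => c Rt = s''), rphi Rt := by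
            refine Finset.sum_congr rfl fun s'' _ => Finset.sum_congr rfl fun Rt hRf => ?_
            obtain ⟨hmem, hcR⟩ := Finset.mem_filter.1 hRf
            have hseg := (hiseg Rt).1 hmem
            have hne := hseg.1
            cases Rt with
            | nil => exact absurd rfl hne
            | cons r Rt' =>
                simp only [hc, List.head?_cons, Option.map_some, Option.getD_some] at hcR
                rw [hrphi]
                simp only [List.head?_cons, Option.elim]
                rw [hcR]
        _ = ∑ Rt ∈ hRfin.toFinset, rphi Rt :=
            Finset.sum_fiberwise_of_maps_to (fun x _ => Finset.mem_univ (c x)) rphi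
    · rw [if_neg hjt]
      have hjT' : j = T := by omega
      have hsingle : hRfin.toFinset = {([] : List (S × ℕ))} := by
        ext Rt
        rw [Set.Finite.mem_toFinset, Finset.mem_singleton]
        constructor
        · rintro (⟨rfl, -⟩ | h)
          · rfl
          · exact absurd (eq_nil_of_sum_eq_zero h.2.1 (by have := h.2.2; omega)) h.1
        · rintro rfl
          exact Or.inl ⟨rfl, hjT'⟩
      rw [hsingle, Finset.sum_singleton]
      simp [hrphi]
  rw [hLfactor, hRfactor]
end

section
/- Correctness of the Viterbi (max-product) recursion for the semi-Markov model: assume the potentials R and A take nonnegative values. For 1 ≤ j ≤ T and s ∈ S let M_j(s) denote the maximum of Φ[ζ] over segmentations ζ of [1,j] whose last segment has state s. Then for every such j and s, M_j(s) = max( max_{2 ≤ i ≤ j, s' ∈ S} M_{i-1}(s') · A(s',s,i-1) · R(s,i,j) , R(s,1,j) ) (the inner max being omitted when j = 1), and the maximum of Φ[ζ] over all segmentations ζ of [1,T] equals max_{s ∈ S} M_T(s). -/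
/-- The Viterbi (max-product) quantity `M_j(s)`: the maximum of the joint
potentials of segmentations of `[1, j]` whose last segment has state `s`
(expressed as the supremum of the finite nonempty set of their values). -/
noncomputable def vitMax {S : Type*} (R : S → ℕ → ℕ → ℝ) (A : S → S → ℕ → ℝ)
    (j : ℕ) (s : S) : ℝ :=
  sSup {x : ℝ | ∃ ζ : List (S × ℕ),
    IsSegmentation 1 j ζ ∧ Option.map Prod.fst ζ.getLast? = some s ∧
      segPhi R A 0 ζ = x}

lemma segPhi_append_s11 {S : Type*} (R : S → ℕ → ℕ → ℝ) (A : S → S → ℕ → ℝ)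
    (ζ : List (S × ℕ)) :
    ∀ (t0 : ℕ) (q : S × ℕ) (s : S) (l : ℕ), ζ.getLast? = some q →
      segPhi R A t0 (ζ ++ [(s, l)]) =
        segPhi R A t0 ζ * A q.1 s (t0 + (ζ.map Prod.snd).sum) *
          R s (t0 + (ζ.map Prod.snd).sum + 1) (t0 + (ζ.map Prod.snd).sum + l) := by
  induction ζ with
  | nil => intro t0 q s l h; simp at h
  | cons hd tl ih =>
    intro t0 q s l h
    obtain ⟨a, b⟩ := hd
    cases tl with
    | nil =>
      simp [List.getLast?] at h
      subst h
      simp [segPhi]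
    | cons hd2 rest =>
      obtain ⟨c, d⟩ := hd2
      have h' : ((c, d) :: rest : List (S × ℕ)).getLast? = some q := by
        simpa [List.getLast?_cons_cons] using h
      have ihx := ih (t0 + b) q s l h'
      simp only [List.map_cons, List.sum_cons] at ihx ⊢
      rw [List.cons_append] at ihx
      simp only [List.cons_append, segPhi, List.append_eq]
      rw [ihx]
      have e : t0 + b + (d + (rest.map Prod.snd).sum) =
          t0 + (b + (d + (rest.map Prod.snd).sum)) := by omega
      rw [e]
      ring

lemma segSet_isGreatest {S : Type*} [Fintype S] [Nonempty S]
    (R : S → ℕ → ℕ → ℝ) (A : S → S → ℕ → ℝ)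
    (hR : ∀ s i j, 0 ≤ R s i j) (hA : ∀ s s' t, 0 ≤ A s s' t) :
    ∀ j, 1 ≤ j → ∀ s : S,
      IsGreatest {x : ℝ | ∃ ζ : List (S × ℕ),
          IsSegmentation 1 j ζ ∧ Option.map Prod.fst ζ.getLast? = some s ∧
            segPhi R A 0 ζ = x}
        (if h : 2 ≤ j then
          max
            ((Finset.Icc 2 j ×ˢ (Finset.univ : Finset S)).sup'
              (Finset.Nonempty.product (Finset.nonempty_Icc.mpr h)
                Finset.univ_nonempty)
              (fun p => vitMax R A (p.1 - 1) p.2 * A p.2 s (p.1 - 1) * R s p.1 j))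
            (R s 1 j)
        else R s 1 j) := by
  intro j
  induction j using Nat.strong_induction_on with
  | _ j ih =>
  intro h1 s
  constructor
  · -- membership
    by_cases h2 : 2 ≤ j
    · rw [dif_pos h2]
      rcases max_choice
        ((Finset.Icc 2 j ×ˢ (Finset.univ : Finset S)).sup'
          (Finset.Nonempty.product (Finset.nonempty_Icc.mpr h2) Finset.univ_nonempty)
          (fun p => vitMax R A (p.1 - 1) p.2 * A p.2 s (p.1 - 1) * R s p.1 j))
        (R s 1 j) with hc | hc
      · rw [hc]
        obtain ⟨p, hp, hpe⟩ := Finset.exists_mem_eq_sup'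
          (Finset.Nonempty.product (Finset.nonempty_Icc.mpr h2)
            (Finset.univ_nonempty : (Finset.univ : Finset S).Nonempty))
          (fun p => vitMax R A (p.1 - 1) p.2 * A p.2 s (p.1 - 1) * R s p.1 j)
        obtain ⟨i, s'⟩ := p
        rw [Finset.mem_product, Finset.mem_Icc] at hp
        obtain ⟨⟨hi2, hij⟩, -⟩ := hp
        have hlt : i - 1 < j := by omega
        have h1' : 1 ≤ i - 1 := by omega
        have hg := ih (i - 1) hlt h1' s'
        have he : vitMax R A (i - 1) s' =
            (if h : 2 ≤ i - 1 then
              max ((Finset.Icc 2 (i-1) ×ˢ (Finset.univ : Finset S)).sup'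
                (Finset.Nonempty.product (Finset.nonempty_Icc.mpr h)
                  Finset.univ_nonempty)
                (fun p => vitMax R A (p.1 - 1) p.2 * A p.2 s' (p.1 - 1) * R s' p.1 (i-1)))
                (R s' 1 (i-1))
            else R s' 1 (i-1)) := hg.csSup_eq
      -- now get ζ' from hg.1, rewritten as vitMax
        rw [← he] at hg
        obtain ⟨ζ', hseg', hlast', hphi'⟩ := hg.1
        obtain ⟨hne', hpos', hsum'⟩ := hseg'
        -- last element of ζ'
        have hne2 : ζ'.getLast? ≠ none := by
          cases hq : ζ'.getLast? with
          | none => rw [hq] at hlast'; simp at hlast'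
          | some q => simp
        obtain ⟨q, hq⟩ := Option.ne_none_iff_exists'.mp hne2
        have hq1 : q.1 = s' := by
          rw [hq] at hlast'; simpa using hlast'
        refine ⟨ζ' ++ [(s, j - (i - 1))], ⟨by simp, ?_, ?_⟩, ?_, ?_⟩
        · intro p hp
          rcases List.mem_append.mp hp with h | h
          · exact hpos' p h
          · simp at h; rw [h]; simp; omega
        · simp only [List.map_append, List.sum_append, List.map_cons, List.sum_cons,
            List.map_nil, List.sum_nil]
          omega
        · simp [List.getLast?_concat]
        · rw [segPhi_append_s11 R A ζ' 0 q s (j - (i - 1)) hq]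
          rw [hphi', hq1, hpe]
          have e1 : 0 + (ζ'.map Prod.snd).sum = i - 1 := by
            simp at hsum' ⊢; omega
          rw [e1]
          have e2 : i - 1 + 1 = i := by omega
          have e3 : i - 1 + (j - (i - 1)) = j := by omega
          rw [e2, e3]
          try simp
      · rw [hc]
        refine ⟨[(s, j)], ⟨by simp, ?_, by simp⟩, by simp, ?_⟩
        · intro p hp; simp at hp; rw [hp]; simp; omega
        · simp [segPhi]
    · rw [dif_neg h2]
      have hj : j = 1 := by omega
      subst hj
      refine ⟨[(s, 1)], ⟨by simp, ?_, by simp⟩, by simp, by simp [segPhi]⟩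
      intro p hp; simp at hp; rw [hp]; simp
  · -- upper bound
    rintro x ⟨ζ, ⟨hne, hpos, hsum⟩, hlast, rfl⟩
    rcases List.eq_nil_or_concat ζ with rfl | ⟨ζ', p, rfl⟩
    · exact absurd rfl hne
    obtain ⟨s2, l⟩ := p
    rw [List.concat_eq_append] at *
    have hs2 : s = s2 := by
      rw [List.getLast?_concat] at hlast
      exact (Option.some_injective _ (by simpa using hlast)).symm
    subst hs2
    have hl : 0 < l := hpos (s, l) (by simp)
    rcases List.eq_nil_or_concat ζ' with rfl | hζ'
    · -- single segment
      have hlj : l = j := by simpa using hsum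
      subst hlj
      have : segPhi R A 0 ([] ++ [(s, l)]) = R s 1 l := by simp [segPhi]
      rw [this]
      split
      · exact le_max_right _ _
      · exact le_rfl
    · have hne' : ζ' ≠ [] := by
        rcases hζ' with ⟨a, b, rfl⟩; simp
      have hne2 : ζ'.getLast? ≠ none := by
        simpa [List.getLast?_eq_none_iff] using hne'
      obtain ⟨q, hq⟩ := Option.ne_none_iff_exists'.mp hne2
      set m := (ζ'.map Prod.snd).sum with hm
      have hm1 : 1 ≤ m := by
        obtain ⟨a, t, rfl⟩ := List.exists_cons_of_ne_nil hne'
        have := hpos a (by simp)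
        simp [hm]; omega
      have hmm : m + l = j := by
        simp [List.map_append] at hsum
        simpa [hm] using hsum
      have hj2 : 2 ≤ j := by omega
      rw [segPhi_append_s11 R A ζ' 0 q s l hq]
      have e1 : 0 + m = m := by omega
      rw [dif_pos hj2]
      -- ζ' is a segmentation of [1, m] with last state q.1
      have hgm := ih m (by omega) hm1 q.1
      have hem : vitMax R A m q.1 = _ := hgm.csSup_eq
      have hub : segPhi R A 0 ζ' ≤ vitMax R A m q.1 := by
        rw [hem]
        apply hgm.2
        refine ⟨ζ', ⟨hne', fun p hp => hpos p (by simp [hp]), by simp [← hm]⟩, ?_, rfl⟩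
        rw [hq]; rfl
      have step : segPhi R A 0 ζ' * A q.1 s (0 + m) * R s (0 + m + 1) (0 + m + l) ≤
          vitMax R A m q.1 * A q.1 s m * R s (m + 1) j := by
        rw [e1]
        have e2 : m + l = j := hmm
        rw [e2]
        exact mul_le_mul_of_nonneg_right
          (mul_le_mul_of_nonneg_right hub (hA _ _ _)) (hR _ _ _)
      refine le_trans step (le_trans ?_ (le_max_left _ _))
      have hmem : ((m + 1, q.1) : ℕ × S) ∈ Finset.Icc 2 j ×ˢ (Finset.univ : Finset S) := by
        rw [Finset.mem_product, Finset.mem_Icc]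
        exact ⟨⟨by omega, by omega⟩, Finset.mem_univ _⟩
      have := Finset.le_sup' (f := fun p : ℕ × S =>
          vitMax R A (p.1 - 1) p.2 * A p.2 s (p.1 - 1) * R s p.1 j) hmem
      simp only [Nat.add_sub_cancel] at this
      exact this

/-- Correctness of the Viterbi (max-product) recursion for the semi-Markov model
with nonnegative potentials: `M_j(s)` satisfies the max-product recursion
` M_j(s) = max( max_{2 ≤ i ≤ j, s'} M_{i-1}(s') · A(s',s,i-1) · R(s,i,j), R(s,1,j) )`
(the inner max omitted when `j = 1`), and the maximum joint potential over all
segmentations of `[1,T]` equals `max_{s} M_T(s)`. -/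
theorem semiCRF_viterbi_correctness {S : Type*} [Fintype S] [Nonempty S]
    (T : ℕ) (hT : 1 ≤ T)
    (R : S → ℕ → ℕ → ℝ) (A : S → S → ℕ → ℝ)
    (hR : ∀ s i j, 0 ≤ R s i j) (hA : ∀ s s' t, 0 ≤ A s s' t) :
    (∀ j, 1 ≤ j → j ≤ T → ∀ s : S,
      vitMax R A j s =
        if h : 2 ≤ j then
          max
            ((Finset.Icc 2 j ×ˢ (Finset.univ : Finset S)).sup'
              (Finset.Nonempty.product (Finset.nonempty_Icc.mpr h)
                Finset.univ_nonempty)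
              (fun p => vitMax R A (p.1 - 1) p.2 * A p.2 s (p.1 - 1) * R s p.1 j))
            (R s 1 j)
        else R s 1 j)
    ∧ sSup {x : ℝ | ∃ ζ : List (S × ℕ),
          IsSegmentation 1 T ζ ∧ segPhi R A 0 ζ = x} =
        Finset.univ.sup' Finset.univ_nonempty (fun s : S => vitMax R A T s) := by
  constructor
  · intro j h1 _ s
    exact (segSet_isGreatest R A hR hA j h1 s).csSup_eq
  · apply IsGreatest.csSup_eq
    constructor
    · obtain ⟨s, -, hse⟩ := Finset.exists_mem_eq_sup'
        (Finset.univ_nonempty : (Finset.univ : Finset S).Nonempty)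
        (fun s => vitMax R A T s)
      rw [hse]
      have hg := segSet_isGreatest R A hR hA T hT s
      have he : vitMax R A T s = _ := hg.csSup_eq
      rw [← he] at hg
      obtain ⟨ζ, hseg, -, hphi⟩ := hg.1
      exact ⟨ζ, hseg, hphi⟩
    · rintro x ⟨ζ, hseg, rfl⟩
      have hne2 : ζ.getLast? ≠ none := by
        simpa [List.getLast?_eq_none_iff] using hseg.1
      obtain ⟨q, hq⟩ := Option.ne_none_iff_exists'.mp hne2
      have hx : segPhi R A 0 ζ ≤ vitMax R A T q.1 := by
        have hg := segSet_isGreatest R A hR hA T hT q.1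
        have he : vitMax R A T q.1 = _ := hg.csSup_eq
        rw [he]
        exact hg.2 ⟨ζ, hseg, by rw [hq]; rfl, rfl⟩
      exact hx.trans (Finset.le_sup' _ (Finset.mem_univ q.1))
end
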